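/- Let C and C' be clauses and L a literal. If C subsumes C' (i.e., Cσ ⊆ C' for some substitution σ), then there exists a clause C_L obtained from C by a finite number of constraint-factoring and constraint-elimination inferences such that C_L ⊴_L C'. -/

import Mathlib

set_option linter.unusedVariables false

/-!
A formalization of the setting of "Computing Witnesses Using the SCAN Algorithm":
first-order clause logic over a language with equality `≃`, individual variables,
(reserved) constants (`par`, used as the tuples of *fresh constants* `c̄`),
function symbols (`fn`, nullary ones serving as ordinary constants),
predicate symbols (`pred`) and predicate variables (`pvar`).
-/

namespace SCANPaper

/-! ### Terms -/

inductive FOTerm : Type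
  | var : ℕ → FOTerm
  | par : ℕ → FOTerm
  | fn : ℕ → List FOTerm → FOTerm

mutual
def FOTerm.beq : FOTerm → FOTerm → Bool
  | .var n, .var m => n == m
  | .par n, .par m => n == m
  | .fn f ts, .fn g ss => f == g && FOTerm.beqList ts ss
  | _, _ => false
def FOTerm.beqList : List FOTerm → List FOTerm → Bool
  | [], [] => true
  | t :: ts, s :: ss => FOTerm.beq t s && FOTerm.beqList ts ss
  | _, _ => false
end

mutual
def FOTerm.beq_iff : ∀ t s : FOTerm, FOTerm.beq t s = true ↔ t = s
  | .var n, .var m => by simp [FOTerm.beq]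
  | .var n, .par m => by simp [FOTerm.beq]
  | .var n, .fn g ss => by simp [FOTerm.beq]
  | .par n, .var m => by simp [FOTerm.beq]
  | .par n, .par m => by simp [FOTerm.beq]
  | .par n, .fn g ss => by simp [FOTerm.beq]
  | .fn f ts, .var m => by simp [FOTerm.beq]
  | .fn f ts, .par m => by simp [FOTerm.beq]
  | .fn f ts, .fn g ss => by simp [FOTerm.beq, FOTerm.beqList_iff ts ss]
def FOTerm.beqList_iff : ∀ ts ss : List FOTerm, FOTerm.beqList ts ss = true ↔ ts = ss
  | [], [] => by simp [FOTerm.beqList]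
  | [], s :: ss => by simp [FOTerm.beqList]
  | t :: ts, [] => by simp [FOTerm.beqList]
  | t :: ts, s :: ss => by
      simp [FOTerm.beqList, FOTerm.beq_iff t s, FOTerm.beqList_iff ts ss]
end

instance : DecidableEq FOTerm := fun t s => decidable_of_iff _ (FOTerm.beq_iff t s)

-- Substitution of terms for individual variables.
mutual
def FOTerm.subst (σ : ℕ → FOTerm) : FOTerm → FOTerm
  | .var n => σ n
  | .par n => .par n
  | .fn f ts => .fn f (FOTerm.substList σ ts)
def FOTerm.substList (σ : ℕ → FOTerm) : List FOTerm → List FOTerm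
  | [] => []
  | t :: ts => FOTerm.subst σ t :: FOTerm.substList σ ts
end

-- Substitution of terms for the reserved constants (`par`).
mutual
def FOTerm.psubst (θ : ℕ → FOTerm) : FOTerm → FOTerm
  | .var n => .var n
  | .par n => θ n
  | .fn f ts => .fn f (FOTerm.psubstList θ ts)
def FOTerm.psubstList (θ : ℕ → FOTerm) : List FOTerm → List FOTerm
  | [] => []
  | t :: ts => FOTerm.psubst θ t :: FOTerm.psubstList θ ts
end

-- A strict upper bound for the variables occurring in a term.
mutual
def FOTerm.maxVar : FOTerm → ℕ
  | .var n => n + 1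
  | .par _ => 0
  | .fn _ ts => FOTerm.maxVarList ts
def FOTerm.maxVarList : List FOTerm → ℕ
  | [] => 0
  | t :: ts => max (FOTerm.maxVar t) (FOTerm.maxVarList ts)
end

/-- Occurrence of the variable `v` in a term. -/
inductive FOTerm.HasVar (v : ℕ) : FOTerm → Prop
  | var : FOTerm.HasVar v (.var v)
  | fn {f : ℕ} {ts : List FOTerm} {t : FOTerm} :
      t ∈ ts → FOTerm.HasVar v t → FOTerm.HasVar v (.fn f ts)

/-- Occurrence of the reserved constant `c` in a term. -/
inductive FOTerm.HasPar (c : ℕ) : FOTerm → Prop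
  | par : FOTerm.HasPar c (.par c)
  | fn {f : ℕ} {ts : List FOTerm} {t : FOTerm} :
      t ∈ ts → FOTerm.HasPar c t → FOTerm.HasPar c (.fn f ts)

/-- The subterm relation. -/
inductive FOTerm.Subterm : FOTerm → FOTerm → Prop
  | refl (t : FOTerm) : FOTerm.Subterm t t
  | fn {s t : FOTerm} {f : ℕ} {ts : List FOTerm} :
      t ∈ ts → FOTerm.Subterm s t → FOTerm.Subterm s (.fn f ts)

/-- `s` is a *proper* subterm of `t`. -/
def FOTerm.ProperSubterm (s t : FOTerm) : Prop :=
  ∃ (f : ℕ) (ts : List FOTerm), t = FOTerm.fn f ts ∧ ∃ u ∈ ts, FOTerm.Subterm s u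

/-! ### Atoms, literals, clauses -/

inductive Atom : Type
  | pred : ℕ → List FOTerm → Atom      -- predicate symbol applied to terms
  | pvar : ℕ → List FOTerm → Atom      -- predicate variable applied to terms
  | eq : FOTerm → FOTerm → Atom        -- equality atom `t ≃ s`
  deriving DecidableEq

/-- A literal: an atom (`pos = true`) or a negated atom (`pos = false`). -/
structure Literal : Type where
  pos : Bool
  atom : Atom
  deriving DecidableEq

/-- A clause: a finite set of literals, read as the universal closure of the
disjunction of its literals. -/
abbrev Clause : Type := Finset Literal

/-- A clause set, read as the conjunction of its clauses. -/
abbrev ClauseSet : Type := Set Clause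

/-- The dual `L⊥` of a literal. -/
def Literal.dual (L : Literal) : Literal := ⟨!L.pos, L.atom⟩

/-- The symbol of an atom (predicate symbol / predicate variable / `≃`). -/
def Atom.sym : Atom → ℕ ⊕ ℕ ⊕ Unit
  | .pred p _ => Sum.inl p
  | .pvar X _ => Sum.inr (Sum.inl X)
  | .eq _ _ => Sum.inr (Sum.inr ())

/-- The terms (arguments) of an atom. -/
def Atom.args : Atom → List FOTerm
  | .pred _ ts => ts
  | .pvar _ ts => ts
  | .eq t s => [t, s]

/-- `L.sameKind L'`: `L` is an `L'`-literal, i.e. `L` and `L'` have the same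
predicate symbol and the same polarity. -/
def Literal.sameKind (L L' : Literal) : Prop :=
  L.pos = L'.pos ∧ L.atom.sym = L'.atom.sym

instance (L L' : Literal) : Decidable (L.sameKind L') := by
  unfold Literal.sameKind; infer_instance

def Literal.subst (σ : ℕ → FOTerm) (L : Literal) : Literal :=
  ⟨L.pos, match L.atom with
    | .pred p ts => .pred p (FOTerm.substList σ ts)
    | .pvar X ts => .pvar X (FOTerm.substList σ ts)
    | .eq t s => .eq (FOTerm.subst σ t) (FOTerm.subst σ s)⟩

def Literal.psubst (θ : ℕ → FOTerm) (L : Literal) : Literal :=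
  ⟨L.pos, match L.atom with
    | .pred p ts => .pred p (FOTerm.psubstList θ ts)
    | .pvar X ts => .pvar X (FOTerm.psubstList θ ts)
    | .eq t s => .eq (FOTerm.psubst θ t) (FOTerm.psubst θ s)⟩

def Clause.subst (σ : ℕ → FOTerm) (C : Clause) : Clause := C.image (Literal.subst σ)

def Clause.psubst (θ : ℕ → FOTerm) (C : Clause) : Clause := C.image (Literal.psubst θ)

/-- The set of variables occurring in a clause. -/
def Clause.vars (C : Clause) : Set ℕ :=
  { v | ∃ L ∈ C, ∃ t ∈ L.atom.args, FOTerm.HasVar v t }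

/-- A strict upper bound for the variables occurring in a clause. -/
def Clause.varBound (C : Clause) : ℕ :=
  C.sup (fun L => FOTerm.maxVarList L.atom.args)

/-- A clause contains none of the reserved constants (i.e. it is a clause of the
original language, so that the reserved constants are *fresh* for it). -/
def Clause.ParFree (C : Clause) : Prop :=
  ∀ L ∈ C, ∀ t ∈ L.atom.args, ∀ c : ℕ, ¬ FOTerm.HasPar c t

/-- The negated equation `t ≄ s`. -/
def neqLit (t s : FOTerm) : Literal := ⟨false, .eq t s⟩

/-- `t̄ ≄ s̄`, the clause (disjunction) of the disequations of corresponding terms. -/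
def constraintClause (ts ss : List FOTerm) : Clause :=
  (List.zipWith neqLit ts ss).toFinset

/-- A clause contains the predicate variable `X`. -/
def Clause.containsPvar (C : Clause) (X : ℕ) : Prop :=
  ∃ L ∈ C, ∃ ts, L.atom = Atom.pvar X ts

/-- A clause contains an occurrence of the predicate variable `X` of polarity `p`
(`true` = positive, `false` = negative). -/
def Clause.hasPvarPol (C : Clause) (X : ℕ) (p : Bool) : Prop :=
  ∃ L ∈ C, L.pos = p ∧ ∃ ts, L.atom = Atom.pvar X ts

/-! ### Semantics -/

/-- A first-order structure: a nonempty domain together with interpretations of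
the function symbols, the reserved constants, and the predicate symbols. -/
structure FOStructure : Type 1 where
  dom : Type
  inh : Inhabited dom
  fn : ℕ → List dom → dom
  par : ℕ → dom
  pred : ℕ → List dom → Prop

/-- Interpretations of the predicate variables. -/
abbrev PInterp (M : FOStructure) : Type := ℕ → List M.dom → Prop

/-- Valuations of the individual variables. -/
abbrev Valu (M : FOStructure) : Type := ℕ → M.dom

mutual
def FOTerm.eval (M : FOStructure) (ρ : Valu M) : FOTerm → M.dom
  | .var n => ρ n
  | .par n => M.par n
  | .fn f ts => M.fn f (FOTerm.evalList M ρ ts)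
def FOTerm.evalList (M : FOStructure) (ρ : Valu M) : List FOTerm → List M.dom
  | [] => []
  | t :: ts => FOTerm.eval M ρ t :: FOTerm.evalList M ρ ts
end

def Atom.sat (M : FOStructure) (ξ : PInterp M) (ρ : Valu M) : Atom → Prop
  | .pred p ts => M.pred p (FOTerm.evalList M ρ ts)
  | .pvar X ts => ξ X (FOTerm.evalList M ρ ts)
  | .eq t s => FOTerm.eval M ρ t = FOTerm.eval M ρ s

def Literal.sat (M : FOStructure) (ξ : PInterp M) (ρ : Valu M) (L : Literal) : Prop :=
  if L.pos then Atom.sat M ξ ρ L.atom else ¬ Atom.sat M ξ ρ L.atom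

/-- Truth of a clause: the universal closure of the disjunction of its literals. -/
def Clause.sat (M : FOStructure) (ξ : PInterp M) (C : Clause) : Prop :=
  ∀ ρ : Valu M, ∃ L ∈ C, Literal.sat M ξ ρ L

/-- Truth of a clause set: the conjunction of its clauses. -/
def ClauseSet.sat (M : FOStructure) (ξ : PInterp M) (N : ClauseSet) : Prop :=
  ∀ C ∈ N, Clause.sat M ξ C

/-- `N ⟹ N'`: semantic entailment between clause sets. -/
def entails (N N' : ClauseSet) : Prop :=
  ∀ (M : FOStructure) (ξ : PInterp M), ClauseSet.sat M ξ N → ClauseSet.sat M ξ N'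

/-- Entailment between clauses. -/
def Clause.entails (C C' : Clause) : Prop :=
  ∀ (M : FOStructure) (ξ : PInterp M), Clause.sat M ξ C → Clause.sat M ξ C'

/-- Logical equivalence between clauses. -/
def Clause.equiv (C C' : Clause) : Prop := Clause.entails C C' ∧ Clause.entails C' C

/-- Truth of the second-order formula `∃X̄ N` in `(M, ξ)`. -/
def satExists (Xs : List ℕ) (N : ClauseSet) (M : FOStructure) (ξ : PInterp M) : Prop :=
  ∃ ξ' : PInterp M, (∀ Y, Y ∉ Xs → ξ' Y = ξ Y) ∧ ClauseSet.sat M ξ' N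

/-! ### Subsumption, variable elimination -/

/-- A variant of a clause: the result of an injective renaming of variables
(clauses are identified up to renaming of variables). -/
def Clause.variant (C C' : Clause) : Prop :=
  ∃ π : ℕ → ℕ, Function.Injective π ∧ C' = Clause.subst (fun n => .var (π n)) C

/-- Equality of clause sets up to renaming of variables. -/
def ClauseSet.eqv (N N' : ClauseSet) : Prop :=
  (∀ C ∈ N, ∃ C' ∈ N', Clause.variant C C') ∧ (∀ C' ∈ N', ∃ C ∈ N, Clause.variant C C')

/-- `C` is a tautology. -/
def Clause.tautological (C : Clause) : Prop := ∃ L ∈ C, L.dual ∈ C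

/-- `C ⊴ C'`: `C` subsumes `C'`. -/
def Clause.subsumes (C C' : Clause) : Prop := ∃ σ, Clause.subst σ C ⊆ C'

/-- `C` is redundant in `N`: it is a tautology or is subsumed by a clause of `N`. -/
def Clause.redundantIn (C : Clause) (N : ClauseSet) : Prop :=
  C.tautological ∨ ∃ S ∈ N, Clause.subsumes S C

/-- `σ` is `L`-injective in `S`: distinct `L`-literals of `S` have distinct images. -/
def LInjective (L : Literal) (σ : ℕ → FOTerm) (S : Clause) : Prop :=
  ∀ L₁ ∈ S, ∀ L₂ ∈ S, L₁.sameKind L → L₂.sameKind L →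
    Literal.subst σ L₁ = Literal.subst σ L₂ → L₁ = L₂

/-- `S ⊴_L C`. -/
def subsumesL (L : Literal) (S C : Clause) : Prop :=
  ∃ σ, LInjective L σ S ∧ Clause.subst σ S ⊆ C

/-- One step of variable elimination: `C →_ve C'`. -/
def velimStep (C C' : Clause) : Prop :=
  ∃ (v : ℕ) (t : FOTerm), neqLit (.var v) t ∈ C ∧ ¬ FOTerm.ProperSubterm (.var v) t ∧
    C' = Clause.subst (fun n => if n = v then t else .var n) (C.erase (neqLit (.var v) t))

/-- `C →_ve* C'`: the reflexive-transitive closure of `→_ve`. -/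
def velim : Clause → Clause → Prop := Relation.ReflTransGen velimStep

/-- `S ⊴_L^ve C`. -/
def subsumesLve (L : Literal) (S C : Clause) : Prop :=
  ∃ C', velim C C' ∧ subsumesL L S C'

/-- `N ⊴_L^ve C` for a clause set `N`. -/
def setSubsumesLve (L : Literal) (N : ClauseSet) (C : Clause) : Prop :=
  ∃ S ∈ N, subsumesLve L S C

/-! ### Pointed clauses and constraint resolution -/

/-- A pointed clause `P = L̲ ∨ C`: a clause with a designated literal. -/
structure PClause : Type where
  lit : Literal
  rest : Clause

/-- The underlying clause of a pointed clause. -/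
def PClause.cl (P : PClause) : Clause := insert P.lit P.rest

/-- `Q` is `P`-resolvable: the designated literal of `Q` is an `L⊥`-literal,
where `L` is the designated literal of `P`. -/
def PClause.resolvableWith (P Q : PClause) : Prop := Q.lit.sameKind P.lit.dual

/-- Renaming a pointed clause apart, by shifting all its variables by `b`. -/
def PClause.shift (Q : PClause) (b : ℕ) : PClause :=
  ⟨Literal.subst (fun n => .var (n + b)) Q.lit, Clause.subst (fun n => .var (n + b)) Q.rest⟩

/-- The constraint resolvent of `P = L(t̄)̲ ∨ C` and `Q = L(s̄)⊥̲ ∨ C'`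
on the given (variable-disjoint) pointed clauses: `t̄ ≄ s̄ ∨ C ∨ C'`. -/
def rawResolvent (P Q : PClause) : Clause :=
  constraintClause P.lit.atom.args Q.lit.atom.args ∪ P.rest ∪ Q.rest

/-- `Res(P, Q)`: the constraint resolvent of `P` and `Q`, where (as clauses are
identified up to renaming of variables) `Q` is w.l.o.g. renamed apart from `P`. -/
def resolvent (P Q : PClause) : Clause :=
  rawResolvent P (Q.shift (Clause.varBound P.cl))

/-- One round of constraint resolution with `P`:
`Res_P^{≤1}(N) = N ∪ {Res(P,P') : P' a P-resolvable pointed clause with underlying clause in N}`. -/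
def ResStep (P : PClause) (N : ClauseSet) : ClauseSet :=
  N ∪ { R | ∃ C ∈ N, ∃ L' ∈ C, Literal.sameKind L' P.lit.dual ∧
        R = resolvent P ⟨L', C.erase L'⟩ }

/-- `Res_P^{≤k}(N)`. -/
def ResLe (P : PClause) : ℕ → ClauseSet → ClauseSet
  | 0, N => N
  | k+1, N => ResStep P (ResLe P k N)

/-- `Res_P^{<ω}(N)`: the resolution closure of `N` with respect to `P`. -/
def ResOmega (P : PClause) (N : ClauseSet) : ClauseSet :=
  { C | ∃ k, C ∈ ResLe P k N }

/-- `P` is purified in `N`. -/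
def purified (P : PClause) (N : ClauseSet) : Prop :=
  ∀ R ∈ ResLe P 1 N, setSubsumesLve P.lit.dual N R

end SCANPaper
namespace SCANPaper

/-! ### Unification -/

def Unifies (σ : ℕ → FOTerm) (ts ss : List FOTerm) : Prop :=
  FOTerm.substList σ ts = FOTerm.substList σ ss

/-- `σ` is a most general unifier of `t̄` and `s̄`. -/
def IsMGU (σ : ℕ → FOTerm) (ts ss : List FOTerm) : Prop :=
  Unifies σ ts ss ∧
    ∀ τ, Unifies τ ts ss →
      ∃ ρ, ∀ t : FOTerm, FOTerm.subst τ t = FOTerm.subst ρ (FOTerm.subst σ t)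

/-! ### The calculus 𝓒 -/

/-- The data of a derivation step of the calculus 𝓒. -/
inductive Step : Type
  | res (P Q : PClause)
  | fac (D : Clause) (L₁ L₂ : Literal)
  | celim (ts ss : List FOTerm) (C₀ : Clause) (σ : ℕ → FOTerm)
  | redDel (C : Clause)
  | varElim (C : Clause) (v : ℕ) (t : FOTerm)
  | extPurDel (X : ℕ) (p : Bool)
  | purDel (P : PClause)

/-- `StepOK S N N'`: the derivation step `S` leads from the clause set `N`
to the clause set `N'`. -/
def StepOK : Step → ClauseSet → ClauseSet → Prop
  | .res P Q, N, N' =>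
      P.cl ∈ N ∧ Q.cl ∈ N ∧ Q.lit.sameKind P.lit.dual ∧ N' = N ∪ {resolvent P Q}
  | .fac D L₁ L₂, N, N' =>
      D ∈ N ∧ L₁ ∈ D ∧ L₂ ∈ D ∧ L₁ ≠ L₂ ∧ L₁.sameKind L₂ ∧
        N' = N ∪ {constraintClause L₁.atom.args L₂.atom.args ∪ D.erase L₂}
  | .celim ts ss C₀ σ, N, N' =>
      (constraintClause ts ss ∪ C₀) ∈ N ∧ IsMGU σ ts ss ∧ N' = N ∪ {Clause.subst σ C₀}
  | .redDel C, N, N' => C ∈ N ∧ Clause.redundantIn C (N \ {C}) ∧ N' = N \ {C}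
  | .varElim C v t, N, N' =>
      C ∈ N ∧ neqLit (.var v) t ∈ C ∧ ¬ FOTerm.ProperSubterm (.var v) t ∧
        N' = (N \ {C}) ∪
          {Clause.subst (fun n => if n = v then t else .var n) (C.erase (neqLit (.var v) t))}
  | .extPurDel X p, N, N' =>
      (∀ C ∈ N, Clause.containsPvar C X → Clause.hasPvarPol C X p) ∧
        N' = {C | C ∈ N ∧ ¬ Clause.containsPvar C X}
  | .purDel P, N, N' =>
      P.cl ∈ N ∧ purified P (N \ {P.cl}) ∧ N' = N \ {P.cl}

/-- A derivation step of the calculus 𝓒. -/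
def CStep (N N' : ClauseSet) : Prop := ∃ S : Step, StepOK S N N'

/-- `DerivOK N D N'`: `D` is a 𝓒-derivation from `N` with conclusion `N'`. -/
inductive DerivOK : ClauseSet → List Step → ClauseSet → Prop
  | nil (N : ClauseSet) : DerivOK N [] N
  | cons {N N' N'' : ClauseSet} {S : Step} {D : List Step} :
      StepOK S N N' → DerivOK N' D N'' → DerivOK N (S :: D) N''

/-! ### Predicate expressions and predicate substitutions

Predicate expressions (such as the possibly infinitary `ℓRes_P`) are represented
by their semantics: for every structure and every interpretation of the (free)
predicate variables, a relation on the domain. -/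

def SemPred : Type 1 := (M : FOStructure) → PInterp M → List M.dom → Prop

/-- A predicate substitution; `none` means the predicate variable is not in its domain. -/
def PSubst : Type 1 := ℕ → Option SemPred

/-- `(Nσ)` is true in `(M, ξ)` iff `N` is true in `(M, σ.apply M ξ)`. -/
def PSubst.apply (σ : PSubst) (M : FOStructure) (ξ : PInterp M) : PInterp M :=
  fun X args =>
    match σ X with
    | none => ξ X args
    | some α => α M ξ args

def PSubst.id : PSubst := fun _ => none

/-- Composition: `σ.comp τ` is the substitution "first `σ`, then `τ`". -/
def PSubst.comp (σ τ : PSubst) : PSubst :=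
  fun X =>
    match σ X with
    | some α => some (fun M ξ d => α M (PSubst.apply τ M ξ) d)
    | none => τ X

def PSubst.single (X : ℕ) (α : SemPred) : PSubst :=
  fun Y => if Y = X then some α else none

/-- `σ ⟺ τ`: same domain and pointwise logically equivalent. -/
def PSubst.equiv (σ τ : PSubst) : Prop :=
  (∀ X, (σ X).isSome ↔ (τ X).isSome) ∧
  ∀ (X : ℕ) (M : FOStructure) (ξ : PInterp M) (args : List M.dom),
    PSubst.apply σ M ξ X args ↔ PSubst.apply τ M ξ X args

/-! ### The local resolution closure `ℓRes_P` and the substitutions `τ_S` -/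

/-- The tuple `c̄` of fresh constants of length `k`. -/
def paramArgs (k : ℕ) : List FOTerm := (List.range k).map FOTerm.par

/-- Reinterpret the fresh constants `c̄` by the domain elements `ds`. -/
def FOStructure.withPars (M : FOStructure) (ds : List M.dom) : FOStructure :=
  { M with par := fun n => ds.getD n (M.par n) }

/-- The clause `{L(c̄)⊥}` for the designated `X`-literal `L` of `P`. -/
def startClause (P : PClause) (X : ℕ) : Clause :=
  {⟨!P.lit.pos, Atom.pvar X (paramArgs P.lit.atom.args.length)⟩}

/-- `ℓRes_P = λc̄. ⋀_{R(c̄,v̄) ∈ Res_P^{<ω}(L(c̄)⊥)} ∀v̄ R(c̄,v̄)` as a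
(possibly infinitary) predicate expression. -/
def lResSem (P : PClause) (X : ℕ) : SemPred := fun M ξ args =>
  ∀ R ∈ ResOmega P {startClause P X}, Clause.sat (M.withPars args) ξ R

/-- `τ_{PurDel_P}`: `[X ← ℓRes_P]` if the designated literal is negative,
`[X ← ¬ℓRes_P]` if it is positive. -/
def tauPurDel (P : PClause) (X : ℕ) : PSubst :=
  PSubst.single X
    (if P.lit.pos then (fun M ξ a => ¬ lResSem P X M ξ a) else lResSem P X)

/-- `[X ← λū.⊥]`. -/
def tauBot (X : ℕ) : PSubst := PSubst.single X (fun _ _ _ => False)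

/-- `[X ← λū.⊤]`. -/
def tauTop (X : ℕ) : PSubst := PSubst.single X (fun _ _ _ => True)

/-- The substitution `τ_S` associated to a 𝓒-derivation step. -/
def Step.tau : Step → PSubst
  | .extPurDel X p => if p then tauTop X else tauBot X
  | .purDel P =>
      match P.lit.atom with
      | .pvar X _ => tauPurDel P X
      | _ => PSubst.id
  | _ => PSubst.id

/-- `σ(D) = τ_{S₁} ⋯ τ_{S_m}` for `D = (S₁, …, S_m)` (parametrized by the
assignment of substitutions to steps). -/
def derivSubst (tau : Step → PSubst) : List Step → PSubst
  | [] => PSubst.id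
  | S :: D => PSubst.comp (tau S) (derivSubst tau D)

/-- `σ` is a witness for `∃X̄ N`: `∃X̄ N ⟺ Nσ`. -/
def IsWitness (Xs : List ℕ) (N : ClauseSet) (σ : PSubst) : Prop :=
  ∀ (M : FOStructure) (ξ : PInterp M),
    satExists Xs N M ξ ↔ ClauseSet.sat M (PSubst.apply σ M ξ) N

/-! ### Fixpoint predicates: `α_{P,Y}` and `gfp_Y α_{P,Y}` -/

/-- The `L⊥`-literals among the non-designated literals of `P`. -/
def PClause.dualLits (P : PClause) : Finset Literal :=
  P.rest.filter (fun L' => L'.sameKind P.lit.dual)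

/-- The non-designated literals of `P` that are not `L⊥`-literals. -/
def PClause.sideLits (P : PClause) : Finset Literal :=
  P.rest.filter (fun L' => ¬ L'.sameKind P.lit.dual)

/-- The monotone operator on `k`-ary relations induced by
`α_{P,Y} = λū. L(ū)⊥ ∧ ∀v̄ (ū ≄ t̄(v̄) ∨ C(v̄) ∨ ⋁ᵢ Y(t̄ᵢ(v̄)))`,
for `P = L(t̄(v̄))̲ ∨ C(v̄) ∨ ⋁ᵢ L(t̄ᵢ(v̄))⊥` with designated `X`-literal `L`. -/
def alphaOp (P : PClause) (X : ℕ) (M : FOStructure) (ξ : PInterp M)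
    (R : List M.dom → Prop) (args : List M.dom) : Prop :=
  (if P.lit.pos then ¬ ξ X args else ξ X args) ∧
  ∀ ρ : Valu M,
    args ≠ FOTerm.evalList M ρ P.lit.atom.args ∨
    (∃ L' ∈ P.sideLits, Literal.sat M ξ ρ L') ∨
    (∃ L' ∈ P.dualLits, R (FOTerm.evalList M ρ L'.atom.args))

/-- The greatest fixpoint (Knaster–Tarski) of a monotone operator on relations. -/
def gfpRel {δ : Type} (F : (List δ → Prop) → List δ → Prop) : List δ → Prop :=
  fun a => ∃ S : List δ → Prop, (∀ b, S b → F S b) ∧ S a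

/-- `gfp_Y α_{P,Y}` as a predicate expression. -/
def gfpAlphaSem (P : PClause) (X : ℕ) : SemPred :=
  fun M ξ args => gfpRel (alphaOp P X M ξ) args

/-- `τ*_S`: as `τ_S`, except that purified clause deletion gets the fixpoint witness. -/
def Step.tauFp : Step → PSubst
  | .purDel P =>
      match P.lit.atom with
      | .pvar X _ =>
          PSubst.single X
            (if P.lit.pos then (fun M ξ a => ¬ gfpAlphaSem P X M ξ a) else gfpAlphaSem P X)
      | _ => PSubst.id
  | S => S.tau

/-! ### The clause sets `B_P^m` and first-order witnesses -/

/-- The clause sets `B_P^m(c̄)`: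
`B_P^0 := λc̄.{⊥}` and
`B_P^{m+1} := λc̄. {L(c̄)⊥} ∪ {c̄ ≄ t̄(v̄) ∨ C(v̄) ∨ ⋁ᵢ Rᵢ(t̄ᵢ(v̄), z̄ᵢ) : Rᵢ ∈ B_P^m(c̄)}`,
where the chosen clauses `Rᵢ` are renamed apart (fresh variables `z̄ᵢ`) and their
fresh constants `c̄` are replaced by the argument terms `t̄ᵢ(v̄)`. -/
def BSet (P : PClause) (X : ℕ) : ℕ → ClauseSet
  | 0 => {(∅ : Clause)}
  | m+1 =>
      insert (startClause P X)
        { R | ∃ g : Literal → Clause,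
            (∀ L' ∈ P.dualLits, g L' ∈ BSet P X m) ∧
            R = constraintClause (paramArgs P.lit.atom.args.length) P.lit.atom.args
                ∪ P.sideLits
                ∪ P.dualLits.sup (fun L' =>
                    Clause.psubst (fun j => (L'.atom.args).getD j (.par j))
                      (Clause.subst
                        (fun v => .var (Clause.varBound P.cl + v * P.dualLits.card
                                          + P.dualLits.toList.idxOf L'))
                        (g L'))) }

/-- `B_P^m` as a predicate expression (the conjunction of the universal closures
of the clauses of `B_P^m(c̄)`). -/
def BSem (P : PClause) (X : ℕ) (m : ℕ) : SemPred := fun M ξ args =>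
  ∀ R ∈ BSet P X m, Clause.sat (M.withPars args) ξ R

/-- `τ^m_{PurDel_P}`: `[X ← B_P^m]` if the designated literal is negative,
`[X ← ¬B_P^m]` if it is positive. -/
def tauB (P : PClause) (X : ℕ) (m : ℕ) : PSubst :=
  PSubst.single X
    (if P.lit.pos then (fun M ξ a => ¬ BSem P X m M ξ a) else BSem P X m)

/-- The substitutions `τᵢ` of Definition `σ_fo(D, f)`; purified clause deletion
steps get `τ^m_{PurDel_P}` where `m` is the annotation value. -/
def Step.tauFo (m : ℕ) : Step → PSubst
  | .purDel P =>
      match P.lit.atom with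
      | .pvar X _ => tauB P X m
      | _ => PSubst.id
  | S => S.tau

/-- `σ_fo(D, f) = τ₁ ⋯ τ_m`. -/
def derivSubstFo (f : ℕ → ℕ) : ℕ → List Step → PSubst
  | _, [] => PSubst.id
  | i, S :: D => PSubst.comp (Step.tauFo (f i) S) (derivSubstFo f (i+1) D)

/-! ### Purification subsumptions and the purification subsumption graph -/

/-- `R_P(N)`: the set of `P`-resolvable pointed clauses `C[L'̲]` with `C ∈ N`
and `L'` an `L⊥`-literal of `C`. -/
def RP (P : PClause) (N : ClauseSet) : Set PClause :=
  { Q | ∃ C ∈ N, ∃ L' ∈ C, Literal.sameKind L' P.lit.dual ∧ Q = ⟨L', C.erase L'⟩ }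

/-- `s` is a `P`-purification subsumption for `N`. -/
def IsPurSub (P : PClause) (N : ClauseSet) (s : PClause → Clause) : Prop :=
  ∀ Q ∈ RP P N, s Q ∈ N ∧ subsumesLve P.lit.dual (s Q) (resolvent P Q)

/-- The edge relation of the purification subsumption graph `G(N, P, s)`. -/
def GEdge (P : PClause) (N : ClauseSet) (s : PClause → Clause) (C C' : Clause) : Prop :=
  ∃ Q ∈ RP P N, Q.cl = C ∧ s Q = C'

/-- There is a path of length `n` in the graph with edge relation `E`. -/
def HasPathLen (E : Clause → Clause → Prop) (n : ℕ) : Prop :=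
  ∃ c : ℕ → Clause, ∀ i < n, E (c i) (c (i+1))

/-- `P` is `k`-acyclically purified in `N`: there is a `P`-purification subsumption
`s` for `N` such that `G(N, P, s)` is acyclic and has longest path length `k`. -/
def kAcyclicallyPurified (P : PClause) (N : ClauseSet) (k : ℕ) : Prop :=
  ∃ s : PClause → Clause, IsPurSub P N s ∧
    (∀ C, ¬ Relation.TransGen (GEdge P N s) C C) ∧
    (∀ n, HasPathLen (GEdge P N s) n → n ≤ k) ∧
    HasPathLen (GEdge P N s) k

end SCANPaper
namespace SCANPaper

/-! ### The inference system 𝓘 (and its extension by paramodulation) -/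

/-- Derivability of a clause from a clause set in the inference system 𝓘
(constraint resolution, constraint factoring, constraint elimination).
Since clauses are identified up to renaming of variables, a clause may be
replaced by any variant of itself. -/
inductive IDerives (N : ClauseSet) : Clause → Prop
  | ax {C : Clause} : C ∈ N → IDerives N C
  | variant {C C' : Clause} : IDerives N C → Clause.variant C C' → IDerives N C'
  | res (P Q : PClause) : IDerives N P.cl → IDerives N Q.cl →
      Q.lit.sameKind P.lit.dual → Disjoint (Clause.vars P.cl) (Clause.vars Q.cl) →
      IDerives N (rawResolvent P Q)
  | fac {D : Clause} (L₁ L₂ : Literal) : IDerives N D → L₁ ∈ D → L₂ ∈ D → L₁ ≠ L₂ →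
      L₁.sameKind L₂ →
      IDerives N (constraintClause L₁.atom.args L₂.atom.args ∪ D.erase L₂)
  | celim (ts ss : List FOTerm) (C₀ : Clause) (σ : ℕ → FOTerm) :
      IDerives N (constraintClause ts ss ∪ C₀) → IsMGU σ ts ss →
      IDerives N (Clause.subst σ C₀)

/-- Replacement of one occurrence of the subterm `r` by `t` in a term. -/
inductive FOTerm.ReplOcc (r t : FOTerm) : FOTerm → FOTerm → Prop
  | here : FOTerm.ReplOcc r t r t
  | fn {f : ℕ} {pre post : List FOTerm} {s s' : FOTerm} :
      FOTerm.ReplOcc r t s s' →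
      FOTerm.ReplOcc r t (.fn f (pre ++ s :: post)) (.fn f (pre ++ s' :: post))

/-- Replacement of one occurrence of the subterm `r` by `t` in an atom. -/
inductive Atom.ReplOcc (r t : FOTerm) : Atom → Atom → Prop
  | pred {p : ℕ} {pre post : List FOTerm} {s s' : FOTerm} :
      FOTerm.ReplOcc r t s s' →
      Atom.ReplOcc r t (.pred p (pre ++ s :: post)) (.pred p (pre ++ s' :: post))
  | pvar {X : ℕ} {pre post : List FOTerm} {s s' : FOTerm} :
      FOTerm.ReplOcc r t s s' →
      Atom.ReplOcc r t (.pvar X (pre ++ s :: post)) (.pvar X (pre ++ s' :: post))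
  | eqL {a a' b : FOTerm} :
      FOTerm.ReplOcc r t a a' → Atom.ReplOcc r t (.eq a b) (.eq a' b)
  | eqR {a b b' : FOTerm} :
      FOTerm.ReplOcc r t b b' → Atom.ReplOcc r t (.eq a b) (.eq a b')

/-- `C'` results from `C` by replacing one occurrence of the subterm `r` by `t`
(in particular, `C` contains the subterm `r`). -/
def Clause.ReplOcc (r t : FOTerm) (C C' : Clause) : Prop :=
  ∃ L ∈ C, ∃ A' : Atom, Atom.ReplOcc r t L.atom A' ∧
    C' = insert (⟨L.pos, A'⟩ : Literal) (C.erase L)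

/-- The positive equation `s ≃ t` as a literal. -/
def eqLit (s t : FOTerm) : Literal := ⟨true, .eq s t⟩

/-- Derivability in the inference system 𝓘 + ParMod. -/
inductive IPDerives (N : ClauseSet) : Clause → Prop
  | ax {C : Clause} : C ∈ N → IPDerives N C
  | variant {C C' : Clause} : IPDerives N C → Clause.variant C C' → IPDerives N C'
  | res (P Q : PClause) : IPDerives N P.cl → IPDerives N Q.cl →
      Q.lit.sameKind P.lit.dual → Disjoint (Clause.vars P.cl) (Clause.vars Q.cl) →
      IPDerives N (rawResolvent P Q)
  | fac {D : Clause} (L₁ L₂ : Literal) : IPDerives N D → L₁ ∈ D → L₂ ∈ D → L₁ ≠ L₂ →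
      L₁.sameKind L₂ →
      IPDerives N (constraintClause L₁.atom.args L₂.atom.args ∪ D.erase L₂)
  | celim (ts ss : List FOTerm) (C₀ : Clause) (σ : ℕ → FOTerm) :
      IPDerives N (constraintClause ts ss ∪ C₀) → IsMGU σ ts ss →
      IPDerives N (Clause.subst σ C₀)
  | parMod {D C' C'' : Clause} (s t r : FOTerm) (σ : ℕ → FOTerm) :
      IPDerives N D → IPDerives N C' → eqLit s t ∈ D →
      Clause.ReplOcc r t C' C'' → IsMGU σ [s] [r] →
      IPDerives N (Clause.subst σ ((D.erase (eqLit s t)) ∪ C''))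

/-- A clause of the language without the equality symbol. -/
def Clause.EqFree (C : Clause) : Prop := ∀ L ∈ C, ∀ t s : FOTerm, L.atom ≠ .eq t s

/-! ### First-order formulas (for background theories) -/

inductive Formula : Type
  | atom : Atom → Formula
  | fls : Formula
  | neg : Formula → Formula
  | conj : Formula → Formula → Formula
  | disj : Formula → Formula → Formula
  | impl : Formula → Formula → Formula
  | biimpl : Formula → Formula → Formula
  | all : ℕ → Formula → Formula
  | exi : ℕ → Formula → Formula

def Formula.sat (M : FOStructure) (ξ : PInterp M) : Formula → Valu M → Prop
  | .atom a, ρ => Atom.sat M ξ ρ a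
  | .fls, _ => False
  | .neg φ, ρ => ¬ Formula.sat M ξ φ ρ
  | .conj φ ψ, ρ => Formula.sat M ξ φ ρ ∧ Formula.sat M ξ ψ ρ
  | .disj φ ψ, ρ => Formula.sat M ξ φ ρ ∨ Formula.sat M ξ ψ ρ
  | .impl φ ψ, ρ => Formula.sat M ξ φ ρ → Formula.sat M ξ ψ ρ
  | .biimpl φ ψ, ρ => Formula.sat M ξ φ ρ ↔ Formula.sat M ξ ψ ρ
  | .all v φ, ρ => ∀ d : M.dom, Formula.sat M ξ φ (Function.update ρ v d)
  | .exi v φ, ρ => ∃ d : M.dom, Formula.sat M ξ φ (Function.update ρ v d)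

/-- The free individual variables of a formula. -/
def Formula.fv : Formula → Set ℕ
  | .atom a => { v | ∃ t ∈ a.args, FOTerm.HasVar v t }
  | .fls => ∅
  | .neg φ => φ.fv
  | .conj φ ψ => φ.fv ∪ ψ.fv
  | .disj φ ψ => φ.fv ∪ ψ.fv
  | .impl φ ψ => φ.fv ∪ ψ.fv
  | .biimpl φ ψ => φ.fv ∪ ψ.fv
  | .all v φ => φ.fv \ {v}
  | .exi v φ => φ.fv \ {v}

def Atom.pvarsOf : Atom → Set ℕ
  | .pvar X _ => {X}
  | _ => ∅

/-- The predicate variables occurring in a formula. -/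
def Formula.pvars : Formula → Set ℕ
  | .atom a => a.pvarsOf
  | .fls => ∅
  | .neg φ => φ.pvars
  | .conj φ ψ => φ.pvars ∪ ψ.pvars
  | .disj φ ψ => φ.pvars ∪ ψ.pvars
  | .impl φ ψ => φ.pvars ∪ ψ.pvars
  | .biimpl φ ψ => φ.pvars ∪ ψ.pvars
  | .all _ φ => φ.pvars
  | .exi _ φ => φ.pvars

/-- Truth of the second-order formula `∃X̄ φ` in `(M, ξ, ρ)`. -/
def satExistsF (Xs : List ℕ) (φ : Formula) (M : FOStructure) (ξ : PInterp M)
    (ρ : Valu M) : Prop :=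
  ∃ ξ' : PInterp M, (∀ Y, Y ∉ Xs → ξ' Y = ξ Y) ∧ Formula.sat M ξ' φ ρ

/-! ### Miscellaneous -/

/-- The first-order predicate `λū. C(ū)` determined by a clause `C` whose free
variables are among `ū = us`, as a predicate expression. -/
def clausePred (us : List ℕ) (C : Clause) : SemPred := fun M ξ args =>
  ∃ L ∈ C,
    Literal.sat M ξ
      (fun n => if n ∈ us then args.getD (us.idxOf n) M.inh.default else M.inh.default) L

/-- One constraint-factoring or constraint-elimination inference on a clause. -/
def facElimStep (C C' : Clause) : Prop :=
  (∃ L₁ ∈ C, ∃ L₂ ∈ C, L₁ ≠ L₂ ∧ L₁.sameKind L₂ ∧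
      C' = constraintClause L₁.atom.args L₂.atom.args ∪ C.erase L₂) ∨
  (∃ (ts ss : List FOTerm) (C₀ : Clause) (σ : ℕ → FOTerm),
      C = constraintClause ts ss ∪ C₀ ∧ IsMGU σ ts ss ∧ C' = Clause.subst σ C₀)

end SCANPaper

namespace SCANPaper

/-! ### Auxiliary development: syntactic unification -/

def sid : ℕ → FOTerm := fun n => .var n

def scomp (μ ρ : ℕ → FOTerm) : ℕ → FOTerm := fun n => FOTerm.subst ρ (μ n)

def bindv (x : ℕ) (t : FOTerm) : ℕ → FOTerm := fun n => if n = x then t else .var n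

theorem substList_eq_map (σ : ℕ → FOTerm) : ∀ ts, FOTerm.substList σ ts = ts.map (FOTerm.subst σ)
  | [] => rfl
  | t :: ts => by simp [FOTerm.substList, substList_eq_map σ ts]

mutual
theorem subst_congr (τ ρ μ : ℕ → FOTerm) (h : ∀ n, τ n = FOTerm.subst ρ (μ n)) :
    ∀ t, FOTerm.subst τ t = FOTerm.subst ρ (FOTerm.subst μ t)
  | .var n => h n
  | .par n => rfl
  | .fn f ts => by simp [FOTerm.subst, substList_congr τ ρ μ h ts]
theorem substList_congr (τ ρ μ : ℕ → FOTerm) (h : ∀ n, τ n = FOTerm.subst ρ (μ n)) :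
    ∀ ts, FOTerm.substList τ ts = FOTerm.substList ρ (FOTerm.substList μ ts)
  | [] => rfl
  | t :: ts => by
      simp [FOTerm.substList, subst_congr τ ρ μ h t, substList_congr τ ρ μ h ts]
end

mutual
def occurs (x : ℕ) : FOTerm → Bool
  | .var n => n == x
  | .par _ => false
  | .fn _ ts => occursList x ts
def occursList (x : ℕ) : List FOTerm → Bool
  | [] => false
  | t :: ts => occurs x t || occursList x ts
end

mutual
def tsize : FOTerm → ℕ
  | .var _ => 1
  | .par _ => 1
  | .fn _ ts => 1 + tsizeList ts
def tsizeList : List FOTerm → ℕ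
  | [] => 0
  | t :: ts => tsize t + tsizeList ts
end

mutual
theorem tsize_pos : ∀ t, 1 ≤ tsize t
  | .var _ => le_refl _
  | .par _ => le_refl _
  | .fn _ _ => by simp [tsize]
end

mutual
theorem occurs_size (τ : ℕ → FOTerm) (x : ℕ) :
    ∀ t, occurs x t = true → tsize (τ x) ≤ tsize (FOTerm.subst τ t)
  | .var n, h => by
      simp [occurs] at h
      subst h; exact le_refl _
  | .par n, h => by simp [occurs] at h
  | .fn f ts, h => by
      simp only [occurs] at h
      simp only [FOTerm.subst, tsize]
      exact le_trans (occursList_size τ x ts h) (Nat.le_add_left _ _)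
theorem occursList_size (τ : ℕ → FOTerm) (x : ℕ) :
    ∀ ts, occursList x ts = true → tsize (τ x) ≤ tsizeList (FOTerm.substList τ ts)
  | t :: ts, h => by
      simp only [occursList, Bool.or_eq_true] at h
      simp only [FOTerm.substList, tsizeList]
      rcases h with h | h
      · exact le_trans (occurs_size τ x t h) (Nat.le_add_right _ _)
      · exact le_trans (occursList_size τ x ts h) (Nat.le_add_left _ _)
end

theorem no_unifier_occurs (τ : ℕ → FOTerm) (x : ℕ) (f : ℕ) (ts : List FOTerm)
    (h : occurs x (.fn f ts) = true) : τ x ≠ FOTerm.subst τ (.fn f ts) := by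
  intro he
  have h1 : tsize (τ x) ≤ tsizeList (FOTerm.substList τ ts) := occursList_size τ x ts h
  have h2 : tsize (τ x) = 1 + tsizeList (FOTerm.substList τ ts) := by
    rw [he]; rfl
  omega

mutual
theorem subst_bind_not_occurs (x : ℕ) (s : FOTerm) :
    ∀ t, occurs x t = false → FOTerm.subst (bindv x s) t = t
  | .var n, h => by
      simp [occurs] at h
      simp [FOTerm.subst, bindv, h]
  | .par n, _ => rfl
  | .fn f ts, h => by
      simp only [occurs] at h
      simp [FOTerm.subst, substList_bind_not_occurs x s ts h]
theorem substList_bind_not_occurs (x : ℕ) (s : FOTerm) :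
    ∀ ts, occursList x ts = false → FOTerm.substList (bindv x s) ts = ts
  | [], _ => rfl
  | t :: ts, h => by
      simp only [occursList, Bool.or_eq_false_iff] at h
      simp [FOTerm.substList, subst_bind_not_occurs x s t h.1,
        substList_bind_not_occurs x s ts h.2]
end

mutual
theorem subst_bind_unif (τ : ℕ → FOTerm) (x : ℕ) (s : FOTerm) (hτ : τ x = FOTerm.subst τ s) :
    ∀ t, FOTerm.subst τ (FOTerm.subst (bindv x s) t) = FOTerm.subst τ t
  | .var n => by
      by_cases h : n = x
      · subst h; simp [FOTerm.subst, bindv, hτ]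
      · simp [FOTerm.subst, bindv, h]
  | .par n => rfl
  | .fn f ts => by
      simp [FOTerm.subst, substList_bind_unif τ x s hτ ts]
theorem substList_bind_unif (τ : ℕ → FOTerm) (x : ℕ) (s : FOTerm)
    (hτ : τ x = FOTerm.subst τ s) :
    ∀ ts, FOTerm.substList τ (FOTerm.substList (bindv x s) ts) = FOTerm.substList τ ts
  | [] => rfl
  | t :: ts => by
      simp [FOTerm.substList, subst_bind_unif τ x s hτ t, substList_bind_unif τ x s hτ ts]
end

mutual
def tvars : FOTerm → Finset ℕ
  | .var n => {n}
  | .par _ => ∅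
  | .fn _ ts => tvarsList ts
def tvarsList : List FOTerm → Finset ℕ
  | [] => ∅
  | t :: ts => tvars t ∪ tvarsList ts
end

mutual
theorem occurs_iff_mem_tvars (x : ℕ) : ∀ t, occurs x t = true ↔ x ∈ tvars t
  | .var n => by simp only [occurs, tvars, Finset.mem_singleton, beq_iff_eq]; omega
  | .par n => by simp [occurs, tvars]
  | .fn f ts => by simp [occurs, tvars, occursList_iff_mem_tvarsList x ts]
theorem occursList_iff_mem_tvarsList (x : ℕ) :
    ∀ ts, occursList x ts = true ↔ x ∈ tvarsList ts
  | [] => by simp [occursList, tvarsList]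
  | t :: ts => by
      simp [occursList, tvarsList, occurs_iff_mem_tvars x t,
        occursList_iff_mem_tvarsList x ts]
end

mutual
theorem tvars_subst_bind (x : ℕ) (s : FOTerm) (hx : x ∉ tvars s) :
    ∀ t, tvars (FOTerm.subst (bindv x s) t) ⊆ (tvars t ∪ tvars s).erase x
  | .var n => by
      by_cases h : n = x
      · subst h
        simp only [FOTerm.subst, bindv, if_pos rfl]
        intro a ha
        exact Finset.mem_erase.2 ⟨fun he => hx (he ▸ ha), Finset.mem_union_right _ ha⟩
      · simp only [FOTerm.subst, bindv, if_neg h, tvars]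
        intro a ha
        simp only [Finset.mem_singleton] at ha
        subst ha
        exact Finset.mem_erase.2 ⟨h, Finset.mem_union_left _ (Finset.mem_singleton_self _)⟩
  | .par n => by simp [FOTerm.subst, tvars]
  | .fn f ts => by
      simp only [FOTerm.subst, tvars]
      exact tvarsList_subst_bind x s hx ts
theorem tvarsList_subst_bind (x : ℕ) (s : FOTerm) (hx : x ∉ tvars s) :
    ∀ ts, tvarsList (FOTerm.substList (bindv x s) ts) ⊆ (tvarsList ts ∪ tvars s).erase x
  | [] => by simp [FOTerm.substList, tvarsList]
  | t :: ts => by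
      simp only [FOTerm.substList, tvarsList]
      intro a ha
      rcases Finset.mem_union.1 ha with ha | ha
      · have := tvars_subst_bind x s hx t ha
        rw [Finset.mem_erase] at this ⊢
        refine ⟨this.1, ?_⟩
        rcases Finset.mem_union.1 this.2 with h | h
        · exact Finset.mem_union_left _ (Finset.mem_union_left _ h)
        · exact Finset.mem_union_right _ h
      · have := tvarsList_subst_bind x s hx ts ha
        rw [Finset.mem_erase] at this ⊢
        refine ⟨this.1, ?_⟩
        rcases Finset.mem_union.1 this.2 with h | h
        · exact Finset.mem_union_left _ (Finset.mem_union_right _ h)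
        · exact Finset.mem_union_right _ h
end

/-! ### Unification problems -/

abbrev Problem : Type := List (FOTerm × FOTerm)

def UnifiesP (τ : ℕ → FOTerm) (E : Problem) : Prop :=
  ∀ p ∈ E, FOTerm.subst τ p.1 = FOTerm.subst τ p.2

def substPairs (σ : ℕ → FOTerm) (E : Problem) : Problem :=
  E.map (fun p => (FOTerm.subst σ p.1, FOTerm.subst σ p.2))

def pvarsP : Problem → Finset ℕ
  | [] => ∅
  | (t, u) :: E => (tvars t ∪ tvars u) ∪ pvarsP E

def sizeP : Problem → ℕ
  | [] => 0
  | (t, u) :: E => tsize t + tsize u + sizeP E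

def unify : ℕ → Problem → Option (ℕ → FOTerm)
  | 0, _ => none
  | _+1, [] => some sid
  | fuel+1, (FOTerm.var x, u) :: E =>
      if u = .var x then unify fuel E
      else if occurs x u then none
      else (unify fuel (substPairs (bindv x u) E)).map (fun μ => scomp (bindv x u) μ)
  | fuel+1, (FOTerm.par n, FOTerm.var x) :: E =>
      (unify fuel (substPairs (bindv x (.par n)) E)).map (fun μ => scomp (bindv x (.par n)) μ)
  | fuel+1, (FOTerm.par n, FOTerm.par m) :: E =>
      if n = m then unify fuel E else none
  | _+1, (FOTerm.par _, FOTerm.fn _ _) :: _ => none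
  | fuel+1, (FOTerm.fn f ts, FOTerm.var x) :: E =>
      if occurs x (.fn f ts) then none
      else (unify fuel (substPairs (bindv x (.fn f ts)) E)).map
        (fun μ => scomp (bindv x (.fn f ts)) μ)
  | _+1, (FOTerm.fn _ _, FOTerm.par _) :: _ => none
  | fuel+1, (FOTerm.fn f ts, FOTerm.fn g ss) :: E =>
      if f = g ∧ ts.length = ss.length then unify fuel (ts.zip ss ++ E) else none

theorem unifiesP_substPairs (τ : ℕ → FOTerm) (x : ℕ) (s : FOTerm)
    (hτ : τ x = FOTerm.subst τ s) (E : Problem) (h : UnifiesP τ E) :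
    UnifiesP τ (substPairs (bindv x s) E) := by
  intro p hp
  simp only [substPairs, List.mem_map] at hp
  obtain ⟨q, hq, rfl⟩ := hp
  simp only [subst_bind_unif τ x s hτ]
  exact h q hq

theorem unifiesP_bind_step (μ : ℕ → FOTerm) (x : ℕ) (s : FOTerm)
    (hx : occurs x s = false) (E : Problem) (h : UnifiesP μ (substPairs (bindv x s) E)) :
    UnifiesP (scomp (bindv x s) μ) ((FOTerm.var x, s) :: E) := by
  have key : ∀ t, FOTerm.subst (scomp (bindv x s) μ) t
      = FOTerm.subst μ (FOTerm.subst (bindv x s) t) :=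
    subst_congr _ μ (bindv x s) (fun n => rfl)
  intro p hp
  rcases List.mem_cons.1 hp with h1 | h1
  · subst h1
    simp only [key]
    have h2 : FOTerm.subst (bindv x s) (FOTerm.var x) = s := by
      simp [FOTerm.subst, bindv]
    rw [h2, subst_bind_not_occurs x s s hx]
  · have := h (FOTerm.subst (bindv x s) p.1, FOTerm.subst (bindv x s) p.2)
      (by simp only [substPairs, List.mem_map]; exact ⟨p, h1, rfl⟩)
    simpa only [key] using this

theorem unifiesP_zip (τ : ℕ → FOTerm) :
    ∀ (ts ss : List FOTerm), ts.length = ss.length →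
      (UnifiesP τ (ts.zip ss) ↔ FOTerm.substList τ ts = FOTerm.substList τ ss)
  | [], [], _ => by simp [UnifiesP, FOTerm.substList]
  | t :: ts, s :: ss, h => by
      simp only [List.length_cons, Nat.add_right_cancel_iff] at h
      simp only [List.zip_cons_cons, FOTerm.substList, List.cons.injEq]
      constructor
      · intro hu
        refine ⟨hu (t, s) List.mem_cons_self, ?_⟩
        exact (unifiesP_zip τ ts ss h).1 (fun p hp => hu p (List.mem_cons_of_mem _ hp))
      · rintro ⟨h1, h2⟩ p hp
        rcases List.mem_cons.1 hp with rfl | hp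
        · exact h1
        · exact (unifiesP_zip τ ts ss h).2 h2 p hp

/-- Soundness and most-generality of `unify`. -/
theorem unify_sound : ∀ (fuel : ℕ) (E : Problem) (μ : ℕ → FOTerm),
    unify fuel E = some μ →
    UnifiesP μ E ∧ ∀ τ, UnifiesP τ E → ∃ ρ, ∀ n, τ n = FOTerm.subst ρ (μ n) := by
  intro fuel
  induction fuel with
  | zero => intro E μ h; simp [unify] at h
  | succ fuel ih =>
    intro E μ h
    match E with
    | [] =>
      simp only [unify, Option.some.injEq] at h
      subst h
      refine ⟨fun p hp => by simp at hp, fun τ _ => ⟨τ, fun n => rfl⟩⟩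
    | (t, u) :: E =>
      -- helper for the var-elimination cases
      have varcase : ∀ (x : ℕ) (s : FOTerm), occurs x s = false →
          (unify fuel (substPairs (bindv x s) E)).map (fun μ => scomp (bindv x s) μ) = some μ →
          UnifiesP μ ((FOTerm.var x, s) :: E) ∧
            ∀ τ, UnifiesP τ ((FOTerm.var x, s) :: E) → ∃ ρ, ∀ n, τ n = FOTerm.subst ρ (μ n) := by
        intro x s hocc hm
        rw [Option.map_eq_some_iff] at hm
        obtain ⟨μ₀, hμ₀, rfl⟩ := hm
        obtain ⟨hs, hg⟩ := ih _ _ hμ₀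
        refine ⟨unifiesP_bind_step μ₀ x s hocc E hs, ?_⟩
        intro τ hτ
        have hτx : τ x = FOTerm.subst τ s := hτ (FOTerm.var x, s) List.mem_cons_self
        have hτE : UnifiesP τ (substPairs (bindv x s) E) :=
          unifiesP_substPairs τ x s hτx E (fun p hp => hτ p (List.mem_cons_of_mem _ hp))
        obtain ⟨ρ, hρ⟩ := hg τ hτE
        refine ⟨ρ, fun n => ?_⟩
        by_cases hn : n = x
        · subst hn
          have : FOTerm.subst τ s = FOTerm.subst ρ (FOTerm.subst μ₀ s) :=
            subst_congr τ ρ μ₀ hρ s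
          calc τ n = FOTerm.subst τ s := hτx
            _ = FOTerm.subst ρ (FOTerm.subst μ₀ s) := this
            _ = FOTerm.subst ρ (scomp (bindv n s) μ₀ n) := by
                  simp [scomp, bindv, FOTerm.subst]
        · calc τ n = FOTerm.subst ρ (μ₀ n) := hρ n
            _ = FOTerm.subst ρ (scomp (bindv x s) μ₀ n) := by
                  simp [scomp, bindv, hn, FOTerm.subst]
      match t, u with
      | .var x, u =>
        by_cases he : u = .var x
        · subst he
          simp only [unify, if_pos rfl] at h
          obtain ⟨hs, hg⟩ := ih _ _ h
          constructor
          · intro p hp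
            rcases List.mem_cons.1 hp with rfl | hp
            · rfl
            · exact hs p hp
          · intro τ hτ
            exact hg τ (fun p hp => hτ p (List.mem_cons_of_mem _ hp))
        · simp only [unify, if_neg he] at h
          by_cases hocc : occurs x u
          · simp [hocc] at h
          · simp only [hocc, Bool.false_eq_true, if_neg, ite_false] at h
            exact varcase x u (by simpa using hocc) h
      | .par n, .var x =>
        simp only [unify] at h
        obtain ⟨hs, hg⟩ := varcase x (.par n) (by simp [occurs]) h
        constructor
        · intro p hp
          rcases List.mem_cons.1 hp with rfl | hp
          · exact (hs (FOTerm.var x, .par n) List.mem_cons_self).symm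
          · exact hs p (List.mem_cons_of_mem _ hp)
        · intro τ hτ
          refine hg τ ?_
          intro p hp
          rcases List.mem_cons.1 hp with rfl | hp
          · exact (hτ (.par n, FOTerm.var x) List.mem_cons_self).symm
          · exact hτ p (List.mem_cons_of_mem _ hp)
      | .par n, .par m =>
        by_cases he : n = m
        · subst he
          simp only [unify, if_pos rfl] at h
          obtain ⟨hs, hg⟩ := ih _ _ h
          constructor
          · intro p hp
            rcases List.mem_cons.1 hp with rfl | hp
            · rfl
            · exact hs p hp
          · intro τ hτ
            exact hg τ (fun p hp => hτ p (List.mem_cons_of_mem _ hp))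
        · simp [unify, he] at h
      | .par n, .fn g ss => simp [unify] at h
      | .fn f ts, .var x =>
        simp only [unify] at h
        by_cases hocc : occurs x (.fn f ts)
        · simp [hocc] at h
        · simp only [hocc, Bool.false_eq_true, ite_false] at h
          obtain ⟨hs, hg⟩ := varcase x (.fn f ts) (by simpa using hocc) h
          constructor
          · intro p hp
            rcases List.mem_cons.1 hp with rfl | hp
            · exact (hs (FOTerm.var x, .fn f ts) List.mem_cons_self).symm
            · exact hs p (List.mem_cons_of_mem _ hp)
          · intro τ hτ
            refine hg τ ?_
            intro p hp
            rcases List.mem_cons.1 hp with rfl | hp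
            · exact (hτ (.fn f ts, FOTerm.var x) List.mem_cons_self).symm
            · exact hτ p (List.mem_cons_of_mem _ hp)
      | .fn f ts, .par m => simp [unify] at h
      | .fn f ts, .fn g ss =>
        simp only [unify] at h
        by_cases hfg : f = g ∧ ts.length = ss.length
        · rw [if_pos hfg] at h
          obtain ⟨rfl, hlen⟩ := hfg
          obtain ⟨hs, hg⟩ := ih _ _ h
          have hsplit : ∀ τ, UnifiesP τ ((FOTerm.fn f ts, FOTerm.fn f ss) :: E) ↔
              UnifiesP τ (ts.zip ss ++ E) := by
            intro τ
            constructor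
            · intro hτ p hp
              rcases List.mem_append.1 hp with hp | hp
              · have := hτ (FOTerm.fn f ts, FOTerm.fn f ss) List.mem_cons_self
                simp only [FOTerm.subst, FOTerm.fn.injEq, true_and] at this
                exact (unifiesP_zip τ ts ss hlen).2 this p hp
              · exact hτ p (List.mem_cons_of_mem _ hp)
            · intro hτ p hp
              rcases List.mem_cons.1 hp with rfl | hp
              · have := (unifiesP_zip τ ts ss hlen).1
                  (fun p hp => hτ p (List.mem_append.2 (Or.inl hp)))
                simp [FOTerm.subst, this]
              · exact hτ p (List.mem_append.2 (Or.inr hp))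
          exact ⟨(hsplit μ).2 hs, fun τ hτ => hg τ ((hsplit τ).1 hτ)⟩
        · rw [if_neg hfg] at h
          exact absurd h (by simp)


theorem pvarsP_append : ∀ A B : Problem, pvarsP (A ++ B) = pvarsP A ∪ pvarsP B
  | [], B => by simp [pvarsP]
  | (t, u) :: A, B => by
      simp [pvarsP, pvarsP_append A B, Finset.union_assoc]

theorem sizeP_append : ∀ A B : Problem, sizeP (A ++ B) = sizeP A + sizeP B
  | [], B => by simp [sizeP]
  | (t, u) :: A, B => by simp [sizeP, sizeP_append A B]; omega

theorem pvarsP_zip : ∀ ts ss : List FOTerm, pvarsP (ts.zip ss) ⊆ tvarsList ts ∪ tvarsList ss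
  | [], _ => by simp [pvarsP]
  | t :: ts, [] => by simp [pvarsP]
  | t :: ts, s :: ss => by
      simp only [List.zip_cons_cons, pvarsP, tvarsList]
      intro a ha
      rcases Finset.mem_union.1 ha with ha | ha
      · rcases Finset.mem_union.1 ha with ha | ha
        · exact Finset.mem_union_left _ (Finset.mem_union_left _ ha)
        · exact Finset.mem_union_right _ (Finset.mem_union_left _ ha)
      · have := pvarsP_zip ts ss ha
        rcases Finset.mem_union.1 this with h | h
        · exact Finset.mem_union_left _ (Finset.mem_union_right _ h)
        · exact Finset.mem_union_right _ (Finset.mem_union_right _ h)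

theorem sizeP_zip : ∀ ts ss : List FOTerm, sizeP (ts.zip ss) ≤ tsizeList ts + tsizeList ss
  | [], _ => by simp [sizeP]
  | t :: ts, [] => by simp [sizeP, tsizeList]
  | t :: ts, s :: ss => by
      simp only [List.zip_cons_cons, sizeP, tsizeList]
      have h : sizeP (ts.zip ss) ≤ tsizeList ts + tsizeList ss :=
        sizeP_zip ts ss
      omega

theorem pvarsP_substPairs (x : ℕ) (s : FOTerm) (hx : x ∉ tvars s) :
    ∀ E : Problem, pvarsP (substPairs (bindv x s) E) ⊆ (pvarsP E ∪ tvars s).erase x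
  | [] => by simp [substPairs, pvarsP]
  | (t, u) :: E => by
      simp only [substPairs, List.map_cons, pvarsP]
      intro a ha
      have memcase : ∀ b : FOTerm, a ∈ tvars (FOTerm.subst (bindv x s) b) →
          a ∈ ((tvars t ∪ tvars u ∪ pvarsP E) ∪ tvars s).erase x → True := fun _ _ _ => trivial
      rcases Finset.mem_union.1 ha with ha | ha
      · rcases Finset.mem_union.1 ha with ha | ha
        · have h2 := tvars_subst_bind x s hx t ha
          rw [Finset.mem_erase] at h2 ⊢
          refine ⟨h2.1, ?_⟩
          rcases Finset.mem_union.1 h2.2 with h | h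
          · exact Finset.mem_union_left _ (Finset.mem_union_left _ (Finset.mem_union_left _ h))
          · exact Finset.mem_union_right _ h
        · have h2 := tvars_subst_bind x s hx u ha
          rw [Finset.mem_erase] at h2 ⊢
          refine ⟨h2.1, ?_⟩
          rcases Finset.mem_union.1 h2.2 with h | h
          · exact Finset.mem_union_left _ (Finset.mem_union_left _ (Finset.mem_union_right _ h))
          · exact Finset.mem_union_right _ h
      · have h2 := pvarsP_substPairs x s hx E ha
        rw [Finset.mem_erase] at h2 ⊢
        refine ⟨h2.1, ?_⟩
        rcases Finset.mem_union.1 h2.2 with h | h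
        · exact Finset.mem_union_left _ (Finset.mem_union_right _ h)
        · exact Finset.mem_union_right _ h

theorem substList_length (σ : ℕ → FOTerm) (ts : List FOTerm) :
    (FOTerm.substList σ ts).length = ts.length := by
  rw [substList_eq_map]; exact List.length_map _

/-- Completeness of `unify`: a unifiable problem is solved with enough fuel. -/
theorem unify_complete : ∀ (k s : ℕ) (E : Problem) (τ : ℕ → FOTerm), UnifiesP τ E →
    (pvarsP E).card ≤ k → sizeP E ≤ s → ∃ fuel μ, unify fuel E = some μ := by
  intro k
  induction k using Nat.strong_induction_on with
  | _ k ihk =>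
  intro s
  induction s using Nat.strong_induction_on with
  | _ s ihs =>
  intro E τ hU hk hs
  match E with
  | [] => exact ⟨1, sid, rfl⟩
  | (t, u) :: E =>
    -- general variable-elimination step
    have varstep : ∀ (x : ℕ) (w : FOTerm), τ x = FOTerm.subst τ w → occurs x w = false →
        UnifiesP τ E → (insert x (pvarsP E ∪ tvars w)).card ≤ k →
        ∃ fuel μ, unify fuel (substPairs (bindv x w) E) = some μ := by
      intro x w hxw hocc hUE hins
      have hxw' : x ∉ tvars w := fun h => by
        rw [← occurs_iff_mem_tvars] at h; rw [hocc] at h; exact Bool.noConfusion h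
      have hUE' : UnifiesP τ (substPairs (bindv x w) E) :=
        unifiesP_substPairs τ x w hxw E hUE
      have hsubvars : pvarsP (substPairs (bindv x w) E) ⊆ (pvarsP E ∪ tvars w).erase x :=
        pvarsP_substPairs x w hxw' E
      have hcard : (pvarsP (substPairs (bindv x w) E)).card < k := by
        have h2 := Finset.card_le_card hsubvars
        have h3 : ((pvarsP E ∪ tvars w).erase x).card + 1
            = (insert x (pvarsP E ∪ tvars w)).card := by
          have hca := Finset.card_erase_add_one (Finset.mem_insert_self x (pvarsP E ∪ tvars w))
          rw [Finset.erase_insert_eq_erase] at hca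
          exact hca
        omega
      exact ihk _ hcard _ _ τ hUE' le_rfl le_rfl
    match t, u with
    | .var x, w =>
      by_cases he : w = .var x
      · subst he
        have hUE : UnifiesP τ E := fun p hp => hU p (List.mem_cons_of_mem _ hp)
        have hsz : sizeP E < s := by
          simp only [sizeP, tsize] at hs; omega
        obtain ⟨fuel, μ, hres⟩ := ihs _ hsz E τ hUE
          (le_trans (Finset.card_le_card
            (by simp only [pvarsP]; exact fun a ha => Finset.mem_union_right _ ha)) hk) le_rfl
        exact ⟨fuel + 1, μ, by simp [unify, hres]⟩
      · have hxw : τ x = FOTerm.subst τ w := hU (FOTerm.var x, w) List.mem_cons_self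
        have hocc : occurs x w = false := by
          match w, he with
          | .var y, he =>
            simp only [occurs, beq_eq_false_iff_ne, ne_eq]
            intro hxy; exact he (by rw [hxy])
          | .par n, _ => rfl
          | .fn f ts, _ =>
            by_contra hcon
            have hcon' : occurs x (.fn f ts) = true := by
              revert hcon; cases occurs x (.fn f ts) <;> simp
            exact no_unifier_occurs τ x f ts hcon' hxw
        have hins : (insert x (pvarsP E ∪ tvars w)).card ≤ k := by
          refine le_trans (Finset.card_le_card ?_) hk
          intro a ha
          simp only [pvarsP, tvars, Finset.mem_insert, Finset.mem_union,
            Finset.mem_singleton] at ha ⊢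
          tauto
        obtain ⟨fuel, μ, hres⟩ := varstep x w hxw hocc
          (fun p hp => hU p (List.mem_cons_of_mem _ hp)) hins
        refine ⟨fuel + 1, scomp (bindv x w) μ, ?_⟩
        simp [unify, he, hocc, hres]
    | .par n, .var x =>
      have hxw : τ x = FOTerm.subst τ (.par n) :=
        (hU (FOTerm.par n, FOTerm.var x) List.mem_cons_self).symm
      have hins : (insert x (pvarsP E ∪ tvars (FOTerm.par n))).card ≤ k := by
        refine le_trans (Finset.card_le_card ?_) hk
        intro a ha
        simp only [pvarsP, tvars, Finset.mem_insert, Finset.mem_union,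
          Finset.mem_singleton, Finset.notMem_empty] at ha ⊢
        tauto
      obtain ⟨fuel, μ, hres⟩ := varstep x (.par n) hxw rfl
        (fun p hp => hU p (List.mem_cons_of_mem _ hp)) hins
      exact ⟨fuel + 1, scomp (bindv x (.par n)) μ, by simp [unify, hres]⟩
    | .par n, .par m =>
      have hnm : n = m := by
        have := hU (FOTerm.par n, FOTerm.par m) List.mem_cons_self
        simp only [FOTerm.subst] at this
        exact FOTerm.par.inj this
      subst hnm
      have hUE : UnifiesP τ E := fun p hp => hU p (List.mem_cons_of_mem _ hp)
      have hsz : sizeP E < s := by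
        simp only [sizeP, tsize] at hs; omega
      obtain ⟨fuel, μ, hres⟩ := ihs _ hsz E τ hUE
        (le_trans (Finset.card_le_card
          (by simp only [pvarsP]; exact fun a ha => Finset.mem_union_right _ ha)) hk) le_rfl
      exact ⟨fuel + 1, μ, by simp [unify, hres]⟩
    | .par n, .fn g ss =>
      have := hU (FOTerm.par n, FOTerm.fn g ss) List.mem_cons_self
      simp only [FOTerm.subst] at this
      exact absurd this (by simp)
    | .fn f ts, .var x =>
      have hxw : τ x = FOTerm.subst τ (.fn f ts) :=
        (hU (FOTerm.fn f ts, FOTerm.var x) List.mem_cons_self).symm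
      have hocc : occurs x (.fn f ts) = false := by
        by_contra hcon
        have hcon' : occurs x (.fn f ts) = true := by
          revert hcon; cases occurs x (.fn f ts) <;> simp
        exact no_unifier_occurs τ x f ts hcon' hxw
      have hins : (insert x (pvarsP E ∪ tvars (FOTerm.fn f ts))).card ≤ k := by
        refine le_trans (Finset.card_le_card ?_) hk
        intro a ha
        simp only [pvarsP, tvars, Finset.mem_insert, Finset.mem_union,
          Finset.mem_singleton] at ha ⊢
        tauto
      obtain ⟨fuel, μ, hres⟩ := varstep x (.fn f ts) hxw hocc
        (fun p hp => hU p (List.mem_cons_of_mem _ hp)) hins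
      refine ⟨fuel + 1, scomp (bindv x (.fn f ts)) μ, ?_⟩
      simp [unify, hocc, hres]
    | .fn f ts, .par m =>
      have := hU (FOTerm.fn f ts, FOTerm.par m) List.mem_cons_self
      simp only [FOTerm.subst] at this
      exact absurd this (by simp)
    | .fn f ts, .fn g ss =>
      have hfn := hU (FOTerm.fn f ts, FOTerm.fn g ss) List.mem_cons_self
      simp only [FOTerm.subst, FOTerm.fn.injEq] at hfn
      obtain ⟨rfl, hlists⟩ := hfn
      have hlen : ts.length = ss.length := by
        have h1 := substList_length τ ts
        have h2 := substList_length τ ss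
        rw [hlists] at h1; omega
      have hUE : UnifiesP τ (ts.zip ss ++ E) := by
        intro p hp
        rcases List.mem_append.1 hp with hp | hp
        · exact (unifiesP_zip τ ts ss hlen).2 hlists p hp
        · exact hU p (List.mem_cons_of_mem _ hp)
      have hvars : pvarsP (ts.zip ss ++ E) ⊆ pvarsP ((FOTerm.fn f ts, FOTerm.fn f ss) :: E) := by
        rw [pvarsP_append]
        intro a ha
        simp only [pvarsP, tvars]
        rcases Finset.mem_union.1 ha with h | h
        · exact Finset.mem_union_left _ (pvarsP_zip ts ss h)
        · exact Finset.mem_union_right _ h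
      have hsz : sizeP (ts.zip ss ++ E) < s := by
        rw [sizeP_append]
        have h1 := sizeP_zip ts ss
        simp only [sizeP, tsize] at hs
        omega
      obtain ⟨fuel, μ, hres⟩ := ihs _ hsz (ts.zip ss ++ E) τ hUE
        (le_trans (Finset.card_le_card hvars) hk) le_rfl
      exact ⟨fuel + 1, μ, by simp [unify, hlen, hres]⟩

/-- Existence of most general unifiers for unifiable lists of terms. -/
theorem mgu_exists (ts ss : List FOTerm) (τ : ℕ → FOTerm) (h : Unifies τ ts ss) :
    ∃ σ, IsMGU σ ts ss := by
  have hlen : ts.length = ss.length := by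
    have h1 := substList_length τ ts
    have h2 := substList_length τ ss
    rw [h] at h1; omega
  have hP : UnifiesP τ (ts.zip ss) := (unifiesP_zip τ ts ss hlen).2 h
  obtain ⟨fuel, μ, hres⟩ := unify_complete (pvarsP (ts.zip ss)).card (sizeP (ts.zip ss))
    (ts.zip ss) τ hP le_rfl le_rfl
  obtain ⟨hsound, hmg⟩ := unify_sound fuel (ts.zip ss) μ hres
  refine ⟨μ, (unifiesP_zip μ ts ss hlen).1 hsound, ?_⟩
  intro τ' hτ'
  obtain ⟨ρ, hρ⟩ := hmg τ' ((unifiesP_zip τ' ts ss hlen).2 hτ')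
  exact ⟨ρ, fun t => subst_congr τ' ρ μ hρ t⟩

/-! ### Lifting substitution composition to literals and clauses -/

theorem Literal.subst_comp_pt (τ ρ μ : ℕ → FOTerm) (h : ∀ n, τ n = FOTerm.subst ρ (μ n))
    (M : Literal) : Literal.subst τ M = Literal.subst ρ (Literal.subst μ M) := by
  obtain ⟨p, a⟩ := M
  cases a with
  | pred q ts => simp [Literal.subst, substList_congr τ ρ μ h ts]
  | pvar X ts => simp [Literal.subst, substList_congr τ ρ μ h ts]
  | eq t s => simp [Literal.subst, subst_congr τ ρ μ h t, subst_congr τ ρ μ h s]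

theorem Clause.subst_comp_pt (τ ρ μ : ℕ → FOTerm) (h : ∀ n, τ n = FOTerm.subst ρ (μ n))
    (S : Clause) : Clause.subst ρ (Clause.subst μ S) = Clause.subst τ S := by
  unfold Clause.subst
  rw [Finset.image_image]
  apply Finset.image_congr
  intro M _
  exact (Literal.subst_comp_pt τ ρ μ h M).symm

theorem Literal.subst_eq_unifies {L₁ L₂ : Literal} (σ : ℕ → FOTerm)
    (hsym : L₁.atom.sym = L₂.atom.sym) (h : Literal.subst σ L₁ = Literal.subst σ L₂) :
    Unifies σ L₁.atom.args L₂.atom.args := by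
  obtain ⟨p₁, a₁⟩ := L₁
  obtain ⟨p₂, a₂⟩ := L₂
  cases a₁ <;> cases a₂ <;> simp_all [Atom.sym, Literal.subst, Atom.args, Unifies,
    FOTerm.substList]

theorem sameKind_of_both {L₁ L₂ L : Literal} (h₁ : L₁.sameKind L) (h₂ : L₂.sameKind L) :
    L₁.sameKind L₂ :=
  ⟨h₁.1.trans h₂.1.symm, h₁.2.trans h₂.2.symm⟩

theorem main_aux (C' : Clause) (L : Literal) :
    ∀ (n : ℕ) (C : Clause) (σ : ℕ → FOTerm), C.card ≤ n → Clause.subst σ C ⊆ C' →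
      ∃ CL : Clause, Relation.ReflTransGen facElimStep C CL ∧ subsumesL L CL C' := by
  intro n
  induction n with
  | zero =>
    intro C σ hc hsub
    have hC : C = ∅ := Finset.card_eq_zero.1 (Nat.le_zero.1 hc)
    subst hC
    refine ⟨∅, Relation.ReflTransGen.refl, σ, ?_, ?_⟩
    · intro L₁ h₁; simp at h₁
    · simp [Clause.subst]
  | succ n ih =>
    intro C σ hc hsub
    by_cases hinj : LInjective L σ C
    · exact ⟨C, Relation.ReflTransGen.refl, σ, hinj, hsub⟩
    · unfold LInjective at hinj
      push_neg at hinj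
      obtain ⟨L₁, h₁, L₂, h₂, hk₁, hk₂, heq, hne⟩ := hinj
      have hk : L₁.sameKind L₂ := sameKind_of_both hk₁ hk₂
      have hU : Unifies σ L₁.atom.args L₂.atom.args := Literal.subst_eq_unifies σ hk.2 heq
      obtain ⟨μ, hμ⟩ := mgu_exists _ _ σ hU
      have step1 : facElimStep C (constraintClause L₁.atom.args L₂.atom.args ∪ C.erase L₂) :=
        Or.inl ⟨L₁, h₁, L₂, h₂, hne, hk, rfl⟩
      have step2 : facElimStep (constraintClause L₁.atom.args L₂.atom.args ∪ C.erase L₂)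
          (Clause.subst μ (C.erase L₂)) :=
        Or.inr ⟨L₁.atom.args, L₂.atom.args, C.erase L₂, μ, rfl, hμ, rfl⟩
      obtain ⟨ρ, hρt⟩ := hμ.2 σ hU
      have hρ : ∀ m, σ m = FOTerm.subst ρ (μ m) := fun m => hρt (.var m)
      have hsub2 : Clause.subst ρ (Clause.subst μ (C.erase L₂)) ⊆ C' := by
        rw [Clause.subst_comp_pt σ ρ μ hρ]
        refine subset_trans ?_ hsub
        exact Finset.image_subset_image (Finset.erase_subset _ _)
      have hcard : (Clause.subst μ (C.erase L₂)).card ≤ n := by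
        have h3 := Finset.card_image_le (s := C.erase L₂) (f := Literal.subst μ)
        have h4 := Finset.card_erase_of_mem h₂
        unfold Clause.subst
        omega
      obtain ⟨CL, hsteps, hfin⟩ := ih (Clause.subst μ (C.erase L₂)) ρ hcard hsub2
      exact ⟨CL, Relation.ReflTransGen.head step1 (Relation.ReflTransGen.head step2 hsteps),
        hfin⟩

end SCANPaper
namespace SCANPaper
/-- If `C` subsumes `C'`, then there exists a clause `C_L`
obtained from `C` by a finite number of constraint-factoring and
constraint-elimination inferences such that `C_L ⊴_L C'`. -/
theorem subsumption_to_L_injective_subsumption (C C' : Clause) (L : Literal)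
    (h : Clause.subsumes C C') :
    ∃ CL : Clause, Relation.ReflTransGen facElimStep C CL ∧ subsumesL L CL C' := by
  obtain ⟨σ, hσ⟩ := h
  exact main_aux C' L C.card C σ le_rfl hσ
end SCANPaper
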